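/- Let λ, μ be C¹ and φ be C² on an open subset of (0,∞)×ℝ, and suppose the wave equation (W) holds there. Define D⁺ = e^{−μ}∂_t + e^{−λ}∂_r, D⁻ = e^{−μ}∂_t − e^{−λ}∂_r, X = φ̇e^{−μ} − φ′e^{−λ}, Y = φ̇e^{−μ} + φ′e^{−λ}, a = (−λ̇ − 1/t)e^{−μ} − μ′e^{−λ}, b = −e^{−μ}/t, c = (−λ̇ − 1/t)e^{−μ} + μ′e^{−λ}. Then D⁺X = aX + bY and D⁻Y = bX + cY. -/

import Mathlib

open Real MeasureTheory Set Filter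

noncomputable section

/-- Partial derivative with respect to the first (time) variable. -/
def pt (u : ℝ → ℝ → ℝ) (t r : ℝ) : ℝ := deriv (fun s => u s r) t

/-- Partial derivative with respect to the second (space) variable. -/
def pr (u : ℝ → ℝ → ℝ) (t r : ℝ) : ℝ := deriv (fun s => u t s) r

/-- Second partial derivative in time. -/
def ptt (u : ℝ → ℝ → ℝ) (t r : ℝ) : ℝ := deriv (fun s => pt u s r) t

/-- Second partial derivative in space. -/
def prr (u : ℝ → ℝ → ℝ) (t r : ℝ) : ℝ := deriv (fun s => pr u t s) r

/-- Vlasov contribution to the energy density. -/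
def vRho (f : ℝ → ℝ → ℝ → ℝ → ℝ) (t r : ℝ) : ℝ :=
  (π / t ^ 2) * ∫ w : ℝ, ∫ F in Ioi (0 : ℝ), Real.sqrt (1 + w ^ 2 + F / t ^ 2) * f t r w F

/-- Vlasov contribution to the radial pressure. -/
def vP (f : ℝ → ℝ → ℝ → ℝ → ℝ) (t r : ℝ) : ℝ :=
  (π / t ^ 2) * ∫ w : ℝ, ∫ F in Ioi (0 : ℝ),
    (w ^ 2 / Real.sqrt (1 + w ^ 2 + F / t ^ 2)) * f t r w F

/-- Vlasov contribution to the momentum density. -/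
def vJ (f : ℝ → ℝ → ℝ → ℝ → ℝ) (t r : ℝ) : ℝ :=
  (π / t ^ 2) * ∫ w : ℝ, ∫ F in Ioi (0 : ℝ), w * f t r w F

/-- Energy density ρ of the Einstein-Vlasov-scalar field system. -/
def rho (f : ℝ → ℝ → ℝ → ℝ → ℝ) (lam mu phi : ℝ → ℝ → ℝ) (t r : ℝ) : ℝ :=
  vRho f t r + (1 / 2) * (Real.exp (-(2 * mu t r)) * (pt phi t r) ^ 2
    + Real.exp (-(2 * lam t r)) * (pr phi t r) ^ 2)

/-- Radial pressure p of the Einstein-Vlasov-scalar field system. -/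
def pres (f : ℝ → ℝ → ℝ → ℝ → ℝ) (lam mu phi : ℝ → ℝ → ℝ) (t r : ℝ) : ℝ :=
  vP f t r + (1 / 2) * (Real.exp (-(2 * mu t r)) * (pt phi t r) ^ 2
    + Real.exp (-(2 * lam t r)) * (pr phi t r) ^ 2)

/-- Momentum density j of the Einstein-Vlasov-scalar field system. -/
def mom (f : ℝ → ℝ → ℝ → ℝ → ℝ) (lam mu phi : ℝ → ℝ → ℝ) (t r : ℝ) : ℝ :=
  vJ f t r - Real.exp (-(lam t r + mu t r)) * pt phi t r * pr phi t r

/-- A regular solution of the surface-symmetric Einstein-Vlasov-scalar field system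
with curvature parameter `k` on the time interval `I ⊆ (0,∞)`. -/
structure IsRegularSolution (k : ℝ) (f : ℝ → ℝ → ℝ → ℝ → ℝ) (lam mu phi : ℝ → ℝ → ℝ)
    (I : Set ℝ) : Prop where
  f_contDiff : ContDiffOn ℝ 1 (fun q : ℝ × ℝ × ℝ × ℝ => f q.1 q.2.1 q.2.2.1 q.2.2.2)
    {q : ℝ × ℝ × ℝ × ℝ | q.1 ∈ I ∧ 0 ≤ q.2.2.2}
  f_nonneg : ∀ t ∈ I, ∀ (r w F : ℝ), 0 ≤ f t r w F
  f_periodic : ∀ (t r w F : ℝ), f t (r + 1) w F = f t r w F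
  supp_bounded : ∀ a ∈ I, ∀ b ∈ I, ∃ C : ℝ, ∀ t ∈ Icc a b, ∀ (r w F : ℝ),
    f t r w F ≠ 0 → |w| ≤ C ∧ F ≤ C
  lam_contDiff : ContDiffOn ℝ 1 (fun q : ℝ × ℝ => lam q.1 q.2) (I ×ˢ (univ : Set ℝ))
  mu_contDiff : ContDiffOn ℝ 2 (fun q : ℝ × ℝ => mu q.1 q.2) (I ×ˢ (univ : Set ℝ))
  phi_contDiff : ContDiffOn ℝ 2 (fun q : ℝ × ℝ => phi q.1 q.2) (I ×ˢ (univ : Set ℝ))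
  lam_periodic : ∀ (t r : ℝ), lam t (r + 1) = lam t r
  mu_periodic : ∀ (t r : ℝ), mu t (r + 1) = mu t r
  phi_periodic : ∀ (t r : ℝ), phi t (r + 1) = phi t r
  /-- (V): the Vlasov equation. -/
  eqV : ∀ t ∈ I, ∀ (r w F : ℝ), 0 ≤ F →
    deriv (fun s => f s r w F) t
      + (Real.exp (mu t r - lam t r) * w / Real.sqrt (1 + w ^ 2 + F / t ^ 2))
          * deriv (fun s => f t s w F) r
      - (pt lam t r * w + Real.exp (mu t r - lam t r) * pr mu t r
          * Real.sqrt (1 + w ^ 2 + F / t ^ 2)) * deriv (fun s => f t r s F) w = 0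
  /-- (E1). -/
  eqE1 : ∀ t ∈ I, ∀ r : ℝ,
    Real.exp (-(2 * mu t r)) * (2 * t * pt lam t r + 1) + k
      = 8 * π * t ^ 2 * rho f lam mu phi t r
  /-- (E2). -/
  eqE2 : ∀ t ∈ I, ∀ r : ℝ,
    Real.exp (-(2 * mu t r)) * (2 * t * pt mu t r - 1) - k
      = 8 * π * t ^ 2 * pres f lam mu phi t r
  /-- (E3). -/
  eqE3 : ∀ t ∈ I, ∀ r : ℝ,
    pr mu t r = -(4 * π * t) * Real.exp (lam t r + mu t r) * mom f lam mu phi t r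
  /-- (W): the wave equation for the scalar field. -/
  eqW : ∀ t ∈ I, ∀ r : ℝ,
    Real.exp (-(2 * lam t r)) * prr phi t r - Real.exp (-(2 * mu t r)) * ptt phi t r
      - Real.exp (-(2 * mu t r)) * (pt lam t r - pt mu t r + 2 / t) * pt phi t r
      - Real.exp (-(2 * lam t r)) * (pr lam t r - pr mu t r) * pr phi t r = 0

/-- Admissible initial data at `t = 1` for the surface-symmetric
Einstein-Vlasov-scalar field system. -/
structure IsInitialData (f0 : ℝ → ℝ → ℝ → ℝ) (lam0 mu0 phi0 psi : ℝ → ℝ) : Prop where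
  f0_contDiff : ContDiffOn ℝ 1 (fun q : ℝ × ℝ × ℝ => f0 q.1 q.2.1 q.2.2)
    {q : ℝ × ℝ × ℝ | 0 ≤ q.2.2}
  f0_nonneg : ∀ (r w F : ℝ), 0 ≤ f0 r w F
  f0_periodic : ∀ (r w F : ℝ), f0 (r + 1) w F = f0 r w F
  f0_supp : ∃ C : ℝ, ∀ (r w F : ℝ), f0 r w F ≠ 0 → |w| ≤ C ∧ F ≤ C
  lam0_C1 : ContDiff ℝ 1 lam0
  psi_C1 : ContDiff ℝ 1 psi
  mu0_C2 : ContDiff ℝ 2 mu0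
  phi0_C2 : ContDiff ℝ 2 phi0
  lam0_periodic : ∀ r : ℝ, lam0 (r + 1) = lam0 r
  mu0_periodic : ∀ r : ℝ, mu0 (r + 1) = mu0 r
  phi0_periodic : ∀ r : ℝ, phi0 (r + 1) = phi0 r
  psi_periodic : ∀ r : ℝ, psi (r + 1) = psi r
  /-- The constraint (E3) holds at `t = 1`. -/
  constraint : ∀ r : ℝ, deriv mu0 r = -(4 * π) * Real.exp (lam0 r + mu0 r) *
    (π * (∫ w : ℝ, ∫ F in Ioi (0 : ℝ), w * f0 r w F)
      - Real.exp (-(lam0 r + mu0 r)) * psi r * deriv phi0 r)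

/-- A solution attains the initial data `(f0, lam0, mu0, phi0, psi)` at `t = 1`. -/
def AttainsData (f : ℝ → ℝ → ℝ → ℝ → ℝ) (lam mu phi : ℝ → ℝ → ℝ)
    (f0 : ℝ → ℝ → ℝ → ℝ) (lam0 mu0 phi0 psi : ℝ → ℝ) : Prop :=
  (∀ (r w F : ℝ), f 1 r w F = f0 r w F) ∧ (∀ r : ℝ, lam 1 r = lam0 r) ∧
    (∀ r : ℝ, mu 1 r = mu0 r) ∧ (∀ r : ℝ, phi 1 r = phi0 r) ∧
    (∀ r : ℝ, pt phi 1 r = psi r)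

/-- A left-maximal regular solution on `(T,1]` attaining the given data at `t = 1`:
it admits no extension to a regular solution on `(T',1]` with `0 ≤ T' < T`. -/
def IsLeftMaximalSolution (k : ℝ) (f : ℝ → ℝ → ℝ → ℝ → ℝ) (lam mu phi : ℝ → ℝ → ℝ)
    (T : ℝ) (f0 : ℝ → ℝ → ℝ → ℝ) (lam0 mu0 phi0 psi : ℝ → ℝ) : Prop :=
  IsRegularSolution k f lam mu phi (Ioc T 1) ∧
  AttainsData f lam mu phi f0 lam0 mu0 phi0 psi ∧
  ∀ T' : ℝ, 0 ≤ T' → T' < T →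
    ¬ ∃ (f' : ℝ → ℝ → ℝ → ℝ → ℝ) (lam' mu' phi' : ℝ → ℝ → ℝ),
      IsRegularSolution k f' lam' mu' phi' (Ioc T' 1) ∧
      AttainsData f' lam' mu' phi' f0 lam0 mu0 phi0 psi ∧
      (∀ t ∈ Ioc T 1, ∀ (r w F : ℝ), f' t r w F = f t r w F) ∧
      (∀ t ∈ Ioc T 1, ∀ r : ℝ, lam' t r = lam t r ∧ mu' t r = mu t r ∧ phi' t r = phi t r)

lemma hasDerivAt_mk_t (r t : ℝ) : HasDerivAt (fun s : ℝ => ((s, r) : ℝ × ℝ)) (1, 0) t :=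
  (hasDerivAt_id t).prodMk (hasDerivAt_const t r)

lemma hasDerivAt_mk_r (t r : ℝ) : HasDerivAt (fun s : ℝ => ((t, s) : ℝ × ℝ)) (0, 1) r :=
  (hasDerivAt_const r t).prodMk (hasDerivAt_id r)

lemma hasDerivAt_fst_dir {u : ℝ → ℝ → ℝ} {p : ℝ × ℝ}
    (h : DifferentiableAt ℝ (fun q : ℝ × ℝ => u q.1 q.2) p) :
    HasDerivAt (fun s => u s p.2) (fderiv ℝ (fun q : ℝ × ℝ => u q.1 q.2) p (1, 0)) p.1 :=
  by have := h.hasFDerivAt.comp_hasDerivAt p.1 (hasDerivAt_mk_t p.2 p.1); exact this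

lemma hasDerivAt_snd_dir {u : ℝ → ℝ → ℝ} {p : ℝ × ℝ}
    (h : DifferentiableAt ℝ (fun q : ℝ × ℝ => u q.1 q.2) p) :
    HasDerivAt (fun s => u p.1 s) (fderiv ℝ (fun q : ℝ × ℝ => u q.1 q.2) p (0, 1)) p.2 :=
  by have := h.hasFDerivAt.comp_hasDerivAt p.2 (hasDerivAt_mk_r p.1 p.2); exact this

lemma pt_eq_fderiv {u : ℝ → ℝ → ℝ} {p : ℝ × ℝ}
    (h : DifferentiableAt ℝ (fun q : ℝ × ℝ => u q.1 q.2) p) :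
    pt u p.1 p.2 = fderiv ℝ (fun q : ℝ × ℝ => u q.1 q.2) p (1, 0) :=
  (hasDerivAt_fst_dir h).deriv.symm ▸ rfl

lemma pr_eq_fderiv {u : ℝ → ℝ → ℝ} {p : ℝ × ℝ}
    (h : DifferentiableAt ℝ (fun q : ℝ × ℝ => u q.1 q.2) p) :
    pr u p.1 p.2 = fderiv ℝ (fun q : ℝ × ℝ => u q.1 q.2) p (0, 1) :=
  (hasDerivAt_snd_dir h).deriv.symm ▸ rfl

lemma hasDerivAt_pt' {u : ℝ → ℝ → ℝ} {p : ℝ × ℝ}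
    (h : DifferentiableAt ℝ (fun q : ℝ × ℝ => u q.1 q.2) p) :
    HasDerivAt (fun s => u s p.2) (pt u p.1 p.2) p.1 :=
  (hasDerivAt_fst_dir h).differentiableAt.hasDerivAt

lemma hasDerivAt_pr' {u : ℝ → ℝ → ℝ} {p : ℝ × ℝ}
    (h : DifferentiableAt ℝ (fun q : ℝ × ℝ => u q.1 q.2) p) :
    HasDerivAt (fun s => u p.1 s) (pr u p.1 p.2) p.2 :=
  (hasDerivAt_snd_dir h).differentiableAt.hasDerivAt

lemma hasDerivAt_fderiv_fst {F : ℝ × ℝ → ℝ} {p : ℝ × ℝ}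
    (h : DifferentiableAt ℝ (fderiv ℝ F) p) (v : ℝ × ℝ) :
    HasDerivAt (fun s => fderiv ℝ F (s, p.2) v)
      (fderiv ℝ (fderiv ℝ F) p (1, 0) v) p.1 := by
  have h1 : HasDerivAt (fun s => fderiv ℝ F (s, p.2)) (fderiv ℝ (fderiv ℝ F) p (1, 0)) p.1 :=
    h.hasFDerivAt.comp_hasDerivAt p.1 (hasDerivAt_mk_t p.2 p.1)
  exact (ContinuousLinearMap.apply ℝ ℝ v).hasFDerivAt.comp_hasDerivAt p.1 h1

lemma hasDerivAt_fderiv_snd {F : ℝ × ℝ → ℝ} {p : ℝ × ℝ}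
    (h : DifferentiableAt ℝ (fderiv ℝ F) p) (v : ℝ × ℝ) :
    HasDerivAt (fun s => fderiv ℝ F (p.1, s) v)
      (fderiv ℝ (fderiv ℝ F) p (0, 1) v) p.2 := by
  have h1 : HasDerivAt (fun s => fderiv ℝ F (p.1, s)) (fderiv ℝ (fderiv ℝ F) p (0, 1)) p.2 :=
    h.hasFDerivAt.comp_hasDerivAt p.2 (hasDerivAt_mk_r p.1 p.2)
  exact (ContinuousLinearMap.apply ℝ ℝ v).hasFDerivAt.comp_hasDerivAt p.2 h1


/-- Lemma 2.2, first part: on an open subset of `(0,∞) × ℝ` where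
the wave equation (W) holds, the null derivatives of `X = φ̇e^{−μ} − φ′e^{−λ}` and
`Y = φ̇e^{−μ} + φ′e^{−λ}` satisfy `D⁺X = aX + bY` and `D⁻Y = bX + cY`. -/
theorem stmt1 (U : Set (ℝ × ℝ)) (hU : IsOpen U) (hUpos : ∀ q ∈ U, 0 < q.1)
    (lam mu phi : ℝ → ℝ → ℝ)
    (hlam : ContDiffOn ℝ 1 (fun q : ℝ × ℝ => lam q.1 q.2) U)
    (hmu : ContDiffOn ℝ 1 (fun q : ℝ × ℝ => mu q.1 q.2) U)
    (hphi : ContDiffOn ℝ 2 (fun q : ℝ × ℝ => phi q.1 q.2) U)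
    (hW : ∀ q ∈ U,
      Real.exp (-(2 * lam q.1 q.2)) * prr phi q.1 q.2
        - Real.exp (-(2 * mu q.1 q.2)) * ptt phi q.1 q.2
        - Real.exp (-(2 * mu q.1 q.2)) * (pt lam q.1 q.2 - pt mu q.1 q.2 + 2 / q.1)
            * pt phi q.1 q.2
        - Real.exp (-(2 * lam q.1 q.2)) * (pr lam q.1 q.2 - pr mu q.1 q.2)
            * pr phi q.1 q.2 = 0) :
    let X : ℝ → ℝ → ℝ := fun t r =>
      pt phi t r * Real.exp (-(mu t r)) - pr phi t r * Real.exp (-(lam t r))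
    let Y : ℝ → ℝ → ℝ := fun t r =>
      pt phi t r * Real.exp (-(mu t r)) + pr phi t r * Real.exp (-(lam t r))
    let a : ℝ → ℝ → ℝ := fun t r =>
      (-(pt lam t r) - 1 / t) * Real.exp (-(mu t r)) - pr mu t r * Real.exp (-(lam t r))
    let b : ℝ → ℝ → ℝ := fun t r => -(Real.exp (-(mu t r)) / t)
    let c : ℝ → ℝ → ℝ := fun t r =>
      (-(pt lam t r) - 1 / t) * Real.exp (-(mu t r)) + pr mu t r * Real.exp (-(lam t r))
    ∀ q ∈ U,
      (Real.exp (-(mu q.1 q.2)) * pt X q.1 q.2 + Real.exp (-(lam q.1 q.2)) * pr X q.1 q.2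
        = a q.1 q.2 * X q.1 q.2 + b q.1 q.2 * Y q.1 q.2) ∧
      (Real.exp (-(mu q.1 q.2)) * pt Y q.1 q.2 - Real.exp (-(lam q.1 q.2)) * pr Y q.1 q.2
        = b q.1 q.2 * X q.1 q.2 + c q.1 q.2 * Y q.1 q.2) := by
  intro X Y a b c q hq
  obtain ⟨t, r⟩ := q
  have ht : (0:ℝ) < t := hUpos (t, r) hq
  -- basic differentiability
  have hΦd : ∀ p ∈ U, DifferentiableAt ℝ (fun q : ℝ × ℝ => phi q.1 q.2) p := fun p hp =>
    (hphi.contDiffAt (hU.mem_nhds hp)).differentiableAt two_ne_zero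
  have hMd : DifferentiableAt ℝ (fun q : ℝ × ℝ => mu q.1 q.2) (t, r) :=
    (hmu.contDiffAt (hU.mem_nhds hq)).differentiableAt one_ne_zero
  have hLd : DifferentiableAt ℝ (fun q : ℝ × ℝ => lam q.1 q.2) (t, r) :=
    (hlam.contDiffAt (hU.mem_nhds hq)).differentiableAt one_ne_zero
  have hΦ'd : DifferentiableAt ℝ (fderiv ℝ (fun q : ℝ × ℝ => phi q.1 q.2)) (t, r) :=
    (((hphi.contDiffAt (hU.mem_nhds hq)).fderiv_right (m := 1) le_rfl).differentiableAt one_ne_zero)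
  set D2 := fderiv ℝ (fderiv ℝ (fun q : ℝ × ℝ => phi q.1 q.2)) (t, r) with hD2
  -- slice neighborhoods
  have hUt : {s : ℝ | ((s, r) : ℝ × ℝ) ∈ U} ∈ nhds t :=
    (hU.preimage (by continuity)).mem_nhds hq
  have hUr : {s : ℝ | ((t, s) : ℝ × ℝ) ∈ U} ∈ nhds r :=
    (hU.preimage (by continuity)).mem_nhds hq
  -- second order derivatives of phi
  have hA : HasDerivAt (fun s => pt phi s r) (D2 (1, 0) (1, 0)) t := by
    refine (hasDerivAt_fderiv_fst hΦ'd (1, 0)).congr_of_eventuallyEq ?_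
    filter_upwards [hUt] with s hs
    exact pt_eq_fderiv (hΦd _ hs)
  have hB : HasDerivAt (fun s => pr phi s r) (D2 (1, 0) (0, 1)) t := by
    refine (hasDerivAt_fderiv_fst hΦ'd (0, 1)).congr_of_eventuallyEq ?_
    filter_upwards [hUt] with s hs
    exact pr_eq_fderiv (hΦd _ hs)
  have hB2 : HasDerivAt (fun s => pt phi t s) (D2 (0, 1) (1, 0)) r := by
    refine (hasDerivAt_fderiv_snd hΦ'd (1, 0)).congr_of_eventuallyEq ?_
    filter_upwards [hUr] with s hs
    exact pt_eq_fderiv (hΦd _ hs)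
  have hC : HasDerivAt (fun s => pr phi t s) (D2 (0, 1) (0, 1)) r := by
    refine (hasDerivAt_fderiv_snd hΦ'd (0, 1)).congr_of_eventuallyEq ?_
    filter_upwards [hUr] with s hs
    exact pr_eq_fderiv (hΦd _ hs)
  -- symmetry of second derivative
  have hsym : D2 (1, 0) (0, 1) = D2 (0, 1) (1, 0) := by
    refine second_derivative_symmetric_of_eventually (f := fun q : ℝ × ℝ => phi q.1 q.2) ?_ hΦ'd.hasFDerivAt (1, 0) (0, 1)
    filter_upwards [hU.mem_nhds hq] with p hp using (hΦd p hp).hasFDerivAt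
  -- first order derivatives of lam, mu along slices
  have hmut : HasDerivAt (fun s => mu s r) (pt mu t r) t := hasDerivAt_pt' hMd
  have hmur : HasDerivAt (fun s => mu t s) (pr mu t r) r := hasDerivAt_pr' hMd
  have hlamt : HasDerivAt (fun s => lam s r) (pt lam t r) t := hasDerivAt_pt' hLd
  have hlamr : HasDerivAt (fun s => lam t s) (pr lam t r) r := hasDerivAt_pr' hLd
  have hEmt : HasDerivAt (fun s => Real.exp (-(mu s r)))
      (Real.exp (-(mu t r)) * -(pt mu t r)) t := hmut.neg.exp
  have hEmr : HasDerivAt (fun s => Real.exp (-(mu t s)))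
      (Real.exp (-(mu t r)) * -(pr mu t r)) r := hmur.neg.exp
  have hElt : HasDerivAt (fun s => Real.exp (-(lam s r)))
      (Real.exp (-(lam t r)) * -(pt lam t r)) t := hlamt.neg.exp
  have hElr : HasDerivAt (fun s => Real.exp (-(lam t s)))
      (Real.exp (-(lam t r)) * -(pr lam t r)) r := hlamr.neg.exp
  -- derivatives of X and Y
  have hptX : pt X t r = D2 (1, 0) (1, 0) * Real.exp (-(mu t r))
      + pt phi t r * (Real.exp (-(mu t r)) * -(pt mu t r))
      - (D2 (1, 0) (0, 1) * Real.exp (-(lam t r))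
        + pr phi t r * (Real.exp (-(lam t r)) * -(pt lam t r))) :=
    ((hA.mul hEmt).sub (hB.mul hElt)).deriv
  have hprX : pr X t r = D2 (0, 1) (1, 0) * Real.exp (-(mu t r))
      + pt phi t r * (Real.exp (-(mu t r)) * -(pr mu t r))
      - (D2 (0, 1) (0, 1) * Real.exp (-(lam t r))
        + pr phi t r * (Real.exp (-(lam t r)) * -(pr lam t r))) :=
    ((hB2.mul hEmr).sub (hC.mul hElr)).deriv
  have hptY : pt Y t r = D2 (1, 0) (1, 0) * Real.exp (-(mu t r))
      + pt phi t r * (Real.exp (-(mu t r)) * -(pt mu t r))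
      + (D2 (1, 0) (0, 1) * Real.exp (-(lam t r))
        + pr phi t r * (Real.exp (-(lam t r)) * -(pt lam t r))) :=
    ((hA.mul hEmt).add (hB.mul hElt)).deriv
  have hprY : pr Y t r = D2 (0, 1) (1, 0) * Real.exp (-(mu t r))
      + pt phi t r * (Real.exp (-(mu t r)) * -(pr mu t r))
      + (D2 (0, 1) (0, 1) * Real.exp (-(lam t r))
        + pr phi t r * (Real.exp (-(lam t r)) * -(pr lam t r))) :=
    ((hB2.mul hEmr).add (hC.mul hElr)).deriv
  -- the wave equation at (t, r)
  have hptt : ptt phi t r = D2 (1, 0) (1, 0) := hA.deriv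
  have hprr : prr phi t r = D2 (0, 1) (0, 1) := hC.deriv
  have hW' := hW (t, r) hq
  simp only [hptt, hprr] at hW'
  have e2m : Real.exp (-(2 * mu t r)) = Real.exp (-(mu t r)) * Real.exp (-(mu t r)) := by
    rw [← Real.exp_add]; ring_nf
  have e2l : Real.exp (-(2 * lam t r)) = Real.exp (-(lam t r)) * Real.exp (-(lam t r)) := by
    rw [← Real.exp_add]; ring_nf
  rw [e2m, e2l] at hW'
  rw [hsym] at hptX hptY
  dsimp only
  constructor
  · rw [hptX, hprX]
    simp only [X, Y, a, b, c]
    linear_combination -hW'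
  · rw [hptY, hprY]
    simp only [X, Y, a, b, c]
    linear_combination -hW'
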